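/- arXiv:2206.08770 — 4 statements merged into one kernel-verified Lean document; each statement's English description precedes it below -/
import Mathlib

section
/- Let n ≥ 3 be an integer, t > 0 and z ∈ ℝⁿ. Then the standard bubble satisfies the Yamabe equation on ℝⁿ: −∑_{i=1}^n ∂²B_{t,z}/∂x_i²(x) = B_{t,z}(x)^{2*−1} = B_{t,z}(x)^{(n+2)/(n−2)} for all x ∈ ℝⁿ. -/
open MeasureTheory Real

noncomputable section

/-- The Euclidean space `ℝⁿ`. -/
abbrev En (n : ℕ) := EuclideanSpace ℝ (Fin n)

/-- Partial derivative in the `i`-th coordinate direction. -/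
noncomputable def pd {n : ℕ} (i : Fin n) (f : En n → ℝ) (x : En n) : ℝ :=
  fderiv ℝ f x (EuclideanSpace.single i 1)

/-- The standard bubble `B_{t,z}(x) = t^{(n-2)/2} (t² + |x-z|²/(n(n-2)))^{-(n-2)/2}`. -/
noncomputable def Bub (n : ℕ) (t : ℝ) (z x : En n) : ℝ :=
  t ^ (((n : ℝ) - 2) / 2) *
    (t ^ 2 + ‖x - z‖ ^ 2 / ((n : ℝ) * ((n : ℝ) - 2))) ^ (-(((n : ℝ) - 2) / 2))

namespace YamabeAux

/-- exponent `p = (n-2)/2` -/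
noncomputable def pe (n : ℕ) : ℝ := ((n : ℝ) - 2) / 2

/-- coefficient `d = 1/(n(n-2))` -/
noncomputable def dd (n : ℕ) : ℝ := ((n : ℝ) * ((n : ℝ) - 2))⁻¹

/-- `q(y) = t² + d ∑ (yⱼ - zⱼ)²` -/
noncomputable def qf (n : ℕ) (t : ℝ) (z : En n) (y : En n) : ℝ :=
  t ^ 2 + dd n * ∑ j, (y j - z j) ^ 2

/-- the derivative of `∑ (yⱼ - zⱼ)²` -/
noncomputable def Sd (n : ℕ) (z : En n) (y : En n) : En n →L[ℝ] ℝ :=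
  ∑ j : Fin n, ((2:ℝ) * (y j - z j)) • (EuclideanSpace.proj j : En n →L[ℝ] ℝ)

variable {n : ℕ} {t : ℝ} {z : En n}

lemma dd_pos (hn : 3 ≤ n) : 0 < dd n := by
  have h3 : (3:ℝ) ≤ (n:ℝ) := by exact_mod_cast hn
  have : (0:ℝ) < (n : ℝ) * ((n : ℝ) - 2) := by nlinarith
  exact inv_pos.2 this

lemma qf_pos (hn : 3 ≤ n) (ht : 0 < t) (y : En n) : 0 < qf n t z y := by
  have h1 : (0:ℝ) ≤ dd n * ∑ j, (y j - z j) ^ 2 :=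
    mul_nonneg (dd_pos hn).le (by positivity)
  have h2 : (0:ℝ) < t ^ 2 := by positivity
  unfold qf; linarith

lemma norm_sq_eq (y : En n) : ‖y - z‖ ^ 2 = ∑ j, (y j - z j) ^ 2 := by
  have h : ‖y - z‖ = Real.sqrt (∑ j, ‖(y - z) j‖ ^ 2) := EuclideanSpace.norm_eq (y - z)
  rw [h, Real.sq_sqrt (by positivity)]
  refine Finset.sum_congr rfl fun j _ => ?_
  rw [Real.norm_eq_abs, sq_abs]
  rfl

lemma Bub_eq : Bub n t z = fun y => t ^ pe n * qf n t z y ^ (-(pe n)) := by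
  funext y
  unfold Bub pe qf dd
  rw [norm_sq_eq]
  simp only [div_eq_inv_mul]

lemma hasFDerivAt_sum (y : En n) :
    HasFDerivAt (fun y : En n => ∑ j, (y j - z j) ^ 2) (Sd n z y) y := by
  have h := HasFDerivAt.fun_sum (u := Finset.univ)
    (fun j (_ : j ∈ Finset.univ) => by
      have hj : HasFDerivAt (fun y : En n => y j - z j)
          (EuclideanSpace.proj j : En n →L[ℝ] ℝ) y :=
        ((EuclideanSpace.proj j : En n →L[ℝ] ℝ).hasFDerivAt (x := y)).sub_const (z j)
      exact hj.mul hj)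
  have heq : (fun y : En n => ∑ j, (y j - z j) ^ 2)
      = fun y : En n => ∑ j, (y j - z j) * (y j - z j) := by
    funext y; exact Finset.sum_congr rfl fun j _ => pow_two _
  rw [heq]
  unfold Sd
  refine h.congr_fderiv (Finset.sum_congr rfl fun j _ => ?_)
  rw [two_mul, add_smul]

lemma hasFDerivAt_qf (y : En n) :
    HasFDerivAt (qf n t z) (dd n • Sd n z y) y :=
  (((hasFDerivAt_sum y).const_mul (dd n)).const_add (t ^ 2) : _)

lemma Sd_apply (y : En n) (i : Fin n) :
    Sd n z y (EuclideanSpace.single i 1) = 2 * (y i - z i) := by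
  unfold Sd
  rw [ContinuousLinearMap.sum_apply]
  have : ∀ j : Fin n,
      (((2:ℝ) * (y j - z j)) • (EuclideanSpace.proj j : En n →L[ℝ] ℝ))
        (EuclideanSpace.single i 1)
      = (2 * (y j - z j)) * (if j = i then (1:ℝ) else 0) := by
    intro j
    rw [ContinuousLinearMap.smul_apply]
    simp [PiLp.proj_apply, EuclideanSpace.single_apply, smul_eq_mul]
  simp only [this, mul_ite, mul_one, mul_zero]
  simp

lemma pd_Bub (hn : 3 ≤ n) (ht : 0 < t) (i : Fin n) (y : En n) :
    pd i (Bub n t z) y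
      = (t ^ pe n * (-(pe n)) * (dd n * 2)) * (qf n t z y ^ (-(pe n) - 1) * (y i - z i)) := by
  have hB : HasFDerivAt (Bub n t z)
      ((t ^ pe n) • ((-(pe n) * qf n t z y ^ (-(pe n) - 1)) • (dd n • Sd n z y))) y := by
    rw [Bub_eq]
    exact ((hasFDerivAt_qf y).rpow_const (Or.inl (qf_pos hn ht y).ne')).const_mul _
  unfold pd
  rw [hB.fderiv]
  simp only [ContinuousLinearMap.smul_apply, Sd_apply, smul_eq_mul]
  ring

lemma pd2_Bub (hn : 3 ≤ n) (ht : 0 < t) (i : Fin n) (x : En n) :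
    pd i (fun y => pd i (Bub n t z) y) x
      = (t ^ pe n * (-(pe n)) * (dd n * 2)) *
          (qf n t z x ^ (-(pe n) - 1)
            + (-(pe n) - 1) * qf n t z x ^ (-(pe n) - 2) * (dd n * 2) * (x i - z i) ^ 2) := by
  have hfun : (fun y => pd i (Bub n t z) y)
      = fun y => (t ^ pe n * (-(pe n)) * (dd n * 2)) *
          (qf n t z y ^ (-(pe n) - 1) * (y i - z i)) := by
    funext y; exact pd_Bub hn ht i y
  have h1 : HasFDerivAt (fun y : En n => qf n t z y ^ (-(pe n) - 1))
      (((-(pe n) - 1) * qf n t z x ^ (-(pe n) - 1 - 1)) • (dd n • Sd n z x)) x :=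
    (hasFDerivAt_qf x).rpow_const (Or.inl (qf_pos hn ht x).ne')
  have h2 : HasFDerivAt (fun y : En n => y i - z i)
      (EuclideanSpace.proj i : En n →L[ℝ] ℝ) x :=
    ((EuclideanSpace.proj i : En n →L[ℝ] ℝ).hasFDerivAt (x := x)).sub_const (z i)
  have h3 := (h1.fun_mul h2).const_mul (t ^ pe n * (-(pe n)) * (dd n * 2))
  rw [hfun]
  unfold pd
  rw [h3.fderiv]
  simp only [ContinuousLinearMap.smul_apply, ContinuousLinearMap.add_apply, Sd_apply,
    smul_eq_mul, PiLp.proj_apply, EuclideanSpace.single_apply, eq_self_iff_true, if_true]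
  have : (-(pe n) - 1 - 1) = -(pe n) - 2 := by ring
  rw [this]
  ring

end YamabeAux

open YamabeAux

/-- The standard bubble solves the Yamabe equation `Δ B = B^{2*-1}` on `ℝⁿ`,
with the geometric sign convention `Δu = -∑ ∂²u/∂x_i²`. -/
theorem stmt1 (n : ℕ) (hn : 3 ≤ n) (t : ℝ) (ht : 0 < t) (z : En n) (x : En n) :
    -(∑ i : Fin n, pd i (fun y => pd i (Bub n t z) y) x) =
      Bub n t z x ^ (((n : ℝ) + 2) / ((n : ℝ) - 2)) := by
  have h3 : (3:ℝ) ≤ (n:ℝ) := by exact_mod_cast hn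
  have hn0 : (n:ℝ) ≠ 0 := by linarith
  have hn2 : (n:ℝ) - 2 ≠ 0 := by linarith
  set Q := qf n t z x with hQ
  have hQpos : 0 < Q := qf_pos hn ht x
  set p := pe n with hp
  set D := dd n with hD
  have hDval : D * ((n:ℝ) * ((n:ℝ) - 2)) = 1 := by
    rw [hD]; unfold dd; field_simp
  -- sum of second derivatives
  have hsum : ∑ i : Fin n, pd i (fun y => pd i (Bub n t z) y) x
      = (t ^ p * (-p) * (D * 2)) *
          ((n:ℝ) * Q ^ (-p - 1)
            + (-p - 1) * Q ^ (-p - 2) * (D * 2) * (∑ i, (x i - z i) ^ 2)) := by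
    rw [Finset.sum_congr rfl fun i _ => pd2_Bub hn ht i x]
    simp only [mul_add, Finset.sum_add_distrib, ← Finset.mul_sum, Finset.sum_const,
      Finset.card_univ, Fintype.card_fin, nsmul_eq_mul]
    rfl
  -- d * s = Q - t²
  have hds : D * (∑ i, (x i - z i) ^ 2) = Q - t ^ 2 := by
    rw [hQ]; unfold qf; rw [← hD]; ring
  -- Q^(-p-2) * Q = Q^(-p-1)
  have hQstep : Q ^ (-p - 2) * Q = Q ^ (-p - 1) := by
    nth_rewrite 2 [← Real.rpow_one Q]
    rw [← Real.rpow_add hQpos]; congr 1; ring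
  set S := ∑ i : Fin n, (x i - z i) ^ 2 with hS0
  have hDv : D = ((n:ℝ) * ((n:ℝ) - 2))⁻¹ := rfl
  have hpv : p = ((n:ℝ) - 2) / 2 := rfl
  have hDne : D ≠ 0 := (dd_pos hn).ne'
  have hSval : S = ((n:ℝ) * ((n:ℝ) - 2)) * (Q - t ^ 2) := by
    have h2 : D⁻¹ * (D * S) = D⁻¹ * (Q - t ^ 2) := by rw [hds]
    rwa [← mul_assoc, inv_mul_cancel₀ hDne, one_mul, hDv, inv_inv] at h2
  have hBx : Bub n t z x = t ^ p * Q ^ (-p) := by rw [Bub_eq]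
  rw [hsum, hBx, ← hQstep, hSval]
  rw [Real.mul_rpow (Real.rpow_nonneg ht.le _) (Real.rpow_nonneg hQpos.le _)]
  rw [← Real.rpow_mul ht.le, ← Real.rpow_mul hQpos.le]
  have he1 : p * (((n:ℝ) + 2) / ((n:ℝ) - 2)) = p + 2 := by
    rw [hpv]; field_simp; ring
  have he2 : (-p) * (((n:ℝ) + 2) / ((n:ℝ) - 2)) = -p - 2 := by
    rw [hpv]; field_simp; ring
  rw [he1, he2, Real.rpow_add ht, show ((2:ℝ)) = ((2:ℕ):ℝ) by norm_num, Real.rpow_natCast]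
  rw [hpv, hDv]
  field_simp
  ring
end
end

section
/- Let n ≥ 3 be an integer and let h be a field of symmetric n×n matrices on ℝⁿ whose entries are homogeneous quadratic polynomials that is trace-free and satisfies ∑_{j=1}^n x_j h_{ij}(x) = 0 for all x and i. Then for every t > 0, z ∈ ℝⁿ and x ∈ ℝⁿ one has the pointwise identity ∑_{p,q=1}^n h_{pq}(x) ∂²_{pq}B_{t,z}(x) = (t^{(n−2)/2}/(n(n−2))) · (∑_{p,q=1}^n h_{pq}(x) z_p z_q) · (t² + |x−z|²/(n(n−2)))^{−(n+2)/2}. -/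
open MeasureTheory Real

noncomputable section

lemma hasFDeriv_base {n : ℕ} (t C : ℝ) (z y : En n) :
    HasFDerivAt (fun w : En n => t ^ 2 + ‖w - z‖ ^ 2 / C)
      ((1 / C) • (2 • (innerSL ℝ (y - z) : En n →L[ℝ] ℝ))) y := by
  have h1 : HasFDerivAt (fun w : En n => w - z) (ContinuousLinearMap.id ℝ (En n)) y :=
    (hasFDerivAt_id y).sub_const z
  have h2 := h1.norm_sq
  rw [ContinuousLinearMap.comp_id] at h2
  have h3 := (h2.const_mul (1 / C)).const_add (t ^ 2)
  have heq : (fun w : En n => t ^ 2 + 1 / C * ‖w - z‖ ^ 2)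
      = fun w : En n => t ^ 2 + ‖w - z‖ ^ 2 / C := by
    funext w; ring
  rw [heq] at h3
  exact h3

lemma hasFDeriv_rpow {n : ℕ} (t C : ℝ) (z y : En n) (e : ℝ)
    (hb : t ^ 2 + ‖y - z‖ ^ 2 / C ≠ 0) :
    HasFDerivAt (fun w : En n => (t ^ 2 + ‖w - z‖ ^ 2 / C) ^ e)
      ((e * (t ^ 2 + ‖y - z‖ ^ 2 / C) ^ (e - 1) * (1 / C)) •
        (2 • (innerSL ℝ (y - z) : En n →L[ℝ] ℝ))) y := by
  have := (Real.hasDerivAt_rpow_const (p := e) (Or.inl hb)).comp_hasFDerivAt y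
    (hasFDeriv_base t C z y)
  rw [show (e * (t ^ 2 + ‖y - z‖ ^ 2 / C) ^ (e - 1) * (1 / C)) •
        (2 • (innerSL ℝ (y - z) : En n →L[ℝ] ℝ))
      = (e * (t ^ 2 + ‖y - z‖ ^ 2 / C) ^ (e - 1)) •
        ((1 / C) • (2 • (innerSL ℝ (y - z) : En n →L[ℝ] ℝ))) by
    rw [smul_smul]]
  exact this

lemma eval_single {n : ℕ} (a : ℝ) (v : En n) (q : Fin n) :
    (a • (2 • (innerSL ℝ v : En n →L[ℝ] ℝ))) (EuclideanSpace.single q 1) = a * (2 * v q) := by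
  simp [real_inner_comm, EuclideanSpace.inner_single_left, EuclideanSpace.inner_single_right]

lemma key1 {n : ℕ} (t C A : ℝ) (ht : 0 < t) (hC : 0 < C) (z : En n) (q : Fin n) (y : En n) :
    pd q (fun w : En n => t ^ A * (t ^ 2 + ‖w - z‖ ^ 2 / C) ^ (-A)) y
      = (t ^ A * (-A) * (1 / C) * 2) *
          ((t ^ 2 + ‖y - z‖ ^ 2 / C) ^ (-A - 1) * (y q - z q)) := by
  have hb : (0:ℝ) < t ^ 2 + ‖y - z‖ ^ 2 / C := by positivity
  have hD := (hasFDeriv_rpow t C z y (-A) hb.ne').const_mul (t ^ A)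
  rw [pd, hD.fderiv]
  rw [ContinuousLinearMap.smul_apply, smul_eq_mul, eval_single]
  simp [sub_eq_add_neg]
  ring

lemma key2 {n : ℕ} (t C A K : ℝ) (ht : 0 < t) (hC : 0 < C) (z : En n) (p q : Fin n) (x : En n) :
    pd p (fun y : En n =>
        K * ((t ^ 2 + ‖y - z‖ ^ 2 / C) ^ (-A - 1) * (y q - z q))) x
      = K * (((-A - 1) * (t ^ 2 + ‖x - z‖ ^ 2 / C) ^ (-A - 1 - 1) * (1 / C)) *
            (2 * (x p - z p)) * (x q - z q)
          + (t ^ 2 + ‖x - z‖ ^ 2 / C) ^ (-A - 1) * (if q = p then 1 else 0)) := by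
  have hb : (0:ℝ) < t ^ 2 + ‖x - z‖ ^ 2 / C := by positivity
  have hP := hasFDeriv_rpow t C z x (-A - 1) hb.ne'
  have hL : HasFDerivAt (fun y : En n => y q - z q)
      (EuclideanSpace.proj q : En n →L[ℝ] ℝ) x :=
    (EuclideanSpace.proj (𝕜 := ℝ) q).hasFDerivAt.sub_const (z q)
  have hM : HasFDerivAt (fun y : En n =>
      K * ((t ^ 2 + ‖y - z‖ ^ 2 / C) ^ (-A - 1) * (y q - z q))) _ x := (hP.mul hL).const_mul K
  rw [pd, hM.fderiv]
  rw [ContinuousLinearMap.smul_apply, smul_eq_mul, ContinuousLinearMap.add_apply,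
    ContinuousLinearMap.smul_apply, ContinuousLinearMap.smul_apply, eval_single]
  have hproj : (EuclideanSpace.proj q : En n →L[ℝ] ℝ) (EuclideanSpace.single p 1)
      = if q = p then (1:ℝ) else 0 := by
    simp [EuclideanSpace.single_apply]
  rw [hproj]
  have hsub : (x - z) p = x p - z p := rfl
  rw [hsub]
  split_ifs <;> simp only [smul_eq_mul] <;> ring

theorem stmt2 (n : ℕ) (hn : 3 ≤ n) (h : En n → Fin n → Fin n → ℝ)
    -- `h(x)` is a symmetric matrix for every `x`
    (hsymm : ∀ x i j, h x i j = h x j i)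
    -- the entries of `h` are homogeneous quadratic polynomials
    (hpoly : ∀ i j, ∃ c : Fin n → Fin n → ℝ,
      ∀ x : En n, h x i j = ∑ p, ∑ q, c p q * x p * x q)
    -- `h` is trace-free
    (htr : ∀ x : En n, ∑ j, h x j j = 0)
    -- `∑_j x_j h_{ij}(x) = 0` for all `x` and `i`
    (hrad : ∀ (x : En n) (i : Fin n), ∑ j, x j * h x i j = 0)
    (t : ℝ) (ht : 0 < t) (z x : En n) :
    ∑ p, ∑ q, h x p q * pd p (fun y => pd q (Bub n t z) y) x =
      t ^ (((n : ℝ) - 2) / 2) / ((n : ℝ) * ((n : ℝ) - 2)) *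
        (∑ p, ∑ q, h x p q * z p * z q) *
        (t ^ 2 + ‖x - z‖ ^ 2 / ((n : ℝ) * ((n : ℝ) - 2))) ^ (-(((n : ℝ) + 2) / 2)) := by
  have hn3 : (3:ℝ) ≤ (n:ℝ) := by exact_mod_cast hn
  set A : ℝ := ((n : ℝ) - 2) / 2 with hA
  set C : ℝ := (n : ℝ) * ((n : ℝ) - 2) with hCdef
  have hC : 0 < C := by
    rw [hCdef]; nlinarith
  set K : ℝ := t ^ A * (-A) * (1 / C) * 2 with hK
  -- first derivative of the bubble
  have H1 : ∀ (q : Fin n) (y : En n),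
      pd q (Bub n t z) y = K * ((t ^ 2 + ‖y - z‖ ^ 2 / C) ^ (-A - 1) * (y q - z q)) := by
    intro q y
    exact key1 t C A ht hC z q y
  -- second derivative
  have H2 : ∀ (p q : Fin n),
      pd p (fun y => pd q (Bub n t z) y) x
        = K * (((-A - 1) * (t ^ 2 + ‖x - z‖ ^ 2 / C) ^ (-A - 1 - 1) * (1 / C)) *
              (2 * (x p - z p)) * (x q - z q)
            + (t ^ 2 + ‖x - z‖ ^ 2 / C) ^ (-A - 1) * (if q = p then 1 else 0)) := by
    intro p q
    have hfun : (fun y => pd q (Bub n t z) y)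
        = fun y : En n => K * ((t ^ 2 + ‖y - z‖ ^ 2 / C) ^ (-A - 1) * (y q - z q)) :=
      funext fun y => H1 q y
    rw [hfun]
    exact key2 t C A K ht hC z p q x
  -- algebraic identities
  have e1 : ∀ i, ∑ j, h x i j * x j = 0 := by
    intro i
    rw [← hrad x i]
    exact Finset.sum_congr rfl fun j _ => mul_comm _ _
  have e2 : ∀ q, ∑ p, h x p q * x p = 0 := by
    intro q
    rw [← hrad x q]
    refine Finset.sum_congr rfl fun p _ => ?_
    rw [hsymm x p q]; ring
  have T1 : ∑ p, ∑ q, h x p q * x p * x q = 0 := by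
    refine Finset.sum_eq_zero fun p _ => ?_
    have : ∑ q, h x p q * x p * x q = x p * ∑ q, h x p q * x q := by
      rw [Finset.mul_sum]; exact Finset.sum_congr rfl fun q _ => by ring
    rw [this, e1, mul_zero]
  have T2 : ∑ p, ∑ q, h x p q * z p * x q = 0 := by
    refine Finset.sum_eq_zero fun p _ => ?_
    have : ∑ q, h x p q * z p * x q = z p * ∑ q, h x p q * x q := by
      rw [Finset.mul_sum]; exact Finset.sum_congr rfl fun q _ => by ring
    rw [this, e1, mul_zero]
  have T3 : ∑ p, ∑ q, h x p q * x p * z q = 0 := by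
    rw [Finset.sum_comm]
    refine Finset.sum_eq_zero fun q _ => ?_
    have : ∑ p, h x p q * x p * z q = z q * ∑ p, h x p q * x p := by
      rw [Finset.mul_sum]; exact Finset.sum_congr rfl fun p _ => by ring
    rw [this, e2, mul_zero]
  have hS1 : ∑ p, ∑ q, h x p q * (x p - z p) * (x q - z q)
      = ∑ p, ∑ q, h x p q * z p * z q := by
    have expand : ∀ p q : Fin n, h x p q * (x p - z p) * (x q - z q)
        = h x p q * x p * x q - h x p q * x p * z q - h x p q * z p * x q
          + h x p q * z p * z q := fun p q => by ring
    simp only [expand, Finset.sum_add_distrib, Finset.sum_sub_distrib, T1, T2, T3]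
    ring
  -- put it together
  set G1 : ℝ := (t ^ 2 + ‖x - z‖ ^ 2 / C) ^ (-A - 1) with hG1
  set K2 : ℝ := K * ((-A - 1) * (t ^ 2 + ‖x - z‖ ^ 2 / C) ^ (-A - 1 - 1) * (1 / C)) * 2
    with hK2
  have split : ∀ p q : Fin n,
      h x p q *
        (K * (((-A - 1) * (t ^ 2 + ‖x - z‖ ^ 2 / C) ^ (-A - 1 - 1) * (1 / C)) *
              (2 * (x p - z p)) * (x q - z q)
            + G1 * (if q = p then 1 else 0)))
        = (if q = p then K * G1 * h x p q else 0)
          + K2 * (h x p q * (x p - z p) * (x q - z q)) := by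
    intro p q
    split_ifs with hh <;> simp [hK2] <;> ring
  calc ∑ p, ∑ q, h x p q * pd p (fun y => pd q (Bub n t z) y) x
      = ∑ p, ∑ q, ((if q = p then K * G1 * h x p q else 0)
          + K2 * (h x p q * (x p - z p) * (x q - z q))) := by
        refine Finset.sum_congr rfl fun p _ => Finset.sum_congr rfl fun q _ => ?_
        rw [H2 p q]
        exact split p q
    _ = (∑ p, K * G1 * h x p p) + K2 * ∑ p, ∑ q, h x p q * (x p - z p) * (x q - z q) := by
        rw [Finset.mul_sum]
        rw [← Finset.sum_add_distrib]
        refine Finset.sum_congr rfl fun p _ => ?_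
        rw [Finset.sum_add_distrib, Finset.sum_ite_eq', Finset.mul_sum]
        simp
    _ = K2 * ∑ p, ∑ q, h x p q * z p * z q := by
        rw [hS1, ← Finset.mul_sum, htr x, mul_zero, zero_add]
    _ = t ^ A / C * (∑ p, ∑ q, h x p q * z p * z q) *
          (t ^ 2 + ‖x - z‖ ^ 2 / C) ^ (-(((n : ℝ) + 2) / 2)) := by
        have hexp : -A - 1 - 1 = -(((n : ℝ) + 2) / 2) := by rw [hA]; ring
        rw [hK2, hK, hexp]
        have hKK : t ^ A * (-A) * (1 / C) * 2 *
            ((-A - 1) * (t ^ 2 + ‖x - z‖ ^ 2 / C) ^ (-(((n : ℝ) + 2) / 2)) * (1 / C)) * 2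
            = t ^ A / C * (t ^ 2 + ‖x - z‖ ^ 2 / C) ^ (-(((n : ℝ) + 2) / 2)) := by
          rw [hA, hCdef]
          have hne1 : (n : ℝ) ≠ 0 := by nlinarith
          have hne2 : (n : ℝ) - 2 ≠ 0 := by nlinarith
          field_simp
          ring
        rw [hKK]; ring
end
end

section
/- Let n ≥ 3 and let A be a symmetric n×n real matrix with A_{ii} = 0 for all i, ∑_{j=1}^n A_{ij} = 0 for all i, A not the zero matrix, and A_{ij} ≠ 0 whenever i ≠ j. Define W_{ijkl} = (A_{ij}/2)(δ_{ik}δ_{jl} − δ_{jk}δ_{il}). Then W has the symmetries of a Weyl tensor (antisymmetry in the first and last pairs, pair-exchange symmetry, trace-freeness, and the first Bianchi identity), and there exists a constant C > 0 such that ∑_{p,q=1}^n (h_{pq}(z))² ≥ C|z|⁴ for all z ∈ ℝⁿ, where h_{pq}(z) = (1/3)∑_{a,b=1}^n W_{paqb} z_a z_b. -/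
noncomputable section

/-- `W` has the symmetries of a Weyl tensor. -/
def IsWeyl (n : ℕ) (W : Fin n → Fin n → Fin n → Fin n → ℝ) : Prop :=
  (∀ i j k l, W i j k l = -W j i k l) ∧
  (∀ i j k l, W i j k l = -W i j l k) ∧
  (∀ i j k l, W i j k l = W k l i j) ∧
  (∀ j l, ∑ i, W i j i l = 0) ∧
  (∀ i j k l, W i j k l + W j k i l + W k i j l = 0)

/-- The Kronecker symbol. -/
def kron {n : ℕ} (i j : Fin n) : ℝ := if i = j then 1 else 0


private lemma kron_pair (n : ℕ) (A : Fin n → Fin n → ℝ) (hAsymm : ∀ i j, A i j = A j i)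
    (i j k l : Fin n) :
    A i j / 2 * (kron i k * kron j l - kron j k * kron i l)
    = A k l / 2 * (kron k i * kron l j - kron l i * kron k j) := by
  unfold kron; split_ifs <;> subst_vars <;> simp_all

private lemma kron_bianchi (n : ℕ) (A : Fin n → Fin n → ℝ) (hAsymm : ∀ i j, A i j = A j i)
    (i j k l : Fin n) :
    A i j / 2 * (kron i k * kron j l - kron j k * kron i l)
    + A j k / 2 * (kron j i * kron k l - kron k i * kron j l)
    + A k i / 2 * (kron k j * kron i l - kron i j * kron k l) = 0 := by
  unfold kron; split_ifs <;> subst_vars <;> simp_all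

private lemma key_sum (n : ℕ) (A : Fin n → Fin n → ℝ)
    (W : Fin n → Fin n → Fin n → Fin n → ℝ)
    (hWdef : ∀ i j k l, W i j k l = A i j / 2 * (kron i k * kron j l - kron j k * kron i l))
    (z : Fin n → ℝ) (p q : Fin n) :
    (∑ a, ∑ b, W p a q b * z a * z b)
    = (if p = q then ∑ a, A p a / 2 * z a ^ 2 else 0) - A p q / 2 * z p * z q := by
  simp only [hWdef]
  simp [kron, sub_mul, mul_sub, ite_mul, mul_ite, Finset.sum_sub_distrib,
    Finset.sum_ite_eq, Finset.sum_ite_eq', Finset.mul_sum]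
  by_cases h : p = q <;> simp [h] <;> ring_nf

theorem stmt9 (n : ℕ) (hn : 3 ≤ n) (A : Fin n → Fin n → ℝ)
    (hAsymm : ∀ i j, A i j = A j i)
    (hAdiag : ∀ i, A i i = 0)
    (hArow : ∀ i, ∑ j, A i j = 0)
    (hAne : ∃ i j, A i j ≠ 0)
    (hAoff : ∀ i j, i ≠ j → A i j ≠ 0)
    (W : Fin n → Fin n → Fin n → Fin n → ℝ)
    (hWdef : ∀ i j k l, W i j k l = A i j / 2 * (kron i k * kron j l - kron j k * kron i l)) :
    IsWeyl n W ∧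
      ∃ C : ℝ, 0 < C ∧ ∀ z : En n,
        C * ‖z‖ ^ 4 ≤ ∑ p, ∑ q, ((1 / 3) * ∑ a, ∑ b, W p a q b * z a * z b) ^ 2 := by
  have hcolsum : ∀ l, ∑ x, A x l = 0 := by
    intro l
    rw [Finset.sum_congr rfl fun x _ => hAsymm x l]
    exact hArow l
  constructor
  · refine ⟨?_, ?_, ?_, ?_, ?_⟩
    · intro i j k l
      rw [hWdef, hWdef, hAsymm i j]; ring
    · intro i j k l
      rw [hWdef, hWdef]; ring
    · intro i j k l
      rw [hWdef, hWdef]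
      exact kron_pair n A hAsymm i j k l
    · intro j l
      simp only [hWdef]
      simp [kron, sub_mul, mul_sub, ite_mul, mul_ite, Finset.sum_sub_distrib,
        Finset.sum_ite_eq, Finset.sum_ite_eq']
      by_cases h : j = l <;> simp [h, hAdiag]
      rw [← Finset.sum_div, hcolsum l]
      simp
    · intro i j k l
      rw [hWdef, hWdef, hWdef]
      exact kron_bianchi n A hAsymm i j k l
  · -- quantitative part
    have key := key_sum n A W hWdef
    set f : En n → ℝ := fun z => ∑ p, ∑ q, ((1 / 3 : ℝ) * ∑ a, ∑ b, W p a q b * z a * z b) ^ 2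
      with hf
    have hfnonneg : ∀ z, 0 ≤ f z := fun z =>
      Finset.sum_nonneg fun p _ => Finset.sum_nonneg fun q _ => sq_nonneg _
    have hfcont : Continuous f := by
      apply continuous_finset_sum; intro p _
      apply continuous_finset_sum; intro q _
      apply Continuous.pow
      apply Continuous.mul continuous_const
      apply continuous_finset_sum; intro a _
      apply continuous_finset_sum; intro b _
      exact ((continuous_const.mul (PiLp.continuous_apply 2 _ a)).mul (PiLp.continuous_apply 2 _ b))
    have hhom : ∀ (c : ℝ) (z : En n), f (c • z) = c ^ 4 * f z := by
      intro c z
      have hterm : ∀ p q : Fin n,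
          ((1 / 3 : ℝ) * ∑ a, ∑ b, W p a q b * (c • z) a * (c • z) b) ^ 2
          = c ^ 4 * ((1 / 3 : ℝ) * ∑ a, ∑ b, W p a q b * z a * z b) ^ 2 := by
        intro p q
        have hsmul : ∀ a : Fin n, (c • z) a = c * z a := fun a => rfl
        rw [key (fun a => (c • z) a) p q, key (fun a => z a) p q]
        simp only [hsmul]
        have hs : (∑ a, A p a / 2 * (c * z a) ^ 2) = c ^ 2 * ∑ a, A p a / 2 * z a ^ 2 := by
          rw [Finset.mul_sum]; exact Finset.sum_congr rfl fun a _ => by ring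
        by_cases h : p = q
        · subst h
          rw [if_pos rfl, if_pos rfl, hs]; ring
        · simp only [if_neg h]; ring
      simp only [hf]
      rw [Finset.sum_congr rfl fun p (_ : p ∈ Finset.univ) =>
        Finset.sum_congr rfl fun q (_ : q ∈ Finset.univ) => hterm p q]
      simp [Finset.mul_sum]
    have hpos : ∀ z : En n, ‖z‖ = 1 → 0 < f z := by
      intro z hz
      rcases (hfnonneg z).lt_or_eq with h | h
      · exact h
      exfalso
      have hterm : ∀ p q : Fin n, ((1 / 3 : ℝ) * ∑ a, ∑ b, W p a q b * z a * z b) ^ 2 = 0 := by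
        intro p q
        have h1 := (Finset.sum_eq_zero_iff_of_nonneg
          (fun p _ => Finset.sum_nonneg fun q _ => sq_nonneg _)).1 h.symm p (Finset.mem_univ p)
        exact (Finset.sum_eq_zero_iff_of_nonneg (fun q _ => sq_nonneg _)).1 h1 q
          (Finset.mem_univ q)
      have hsum0 : ∀ p q : Fin n, (∑ a, ∑ b, W p a q b * z a * z b) = 0 := by
        intro p q
        have := pow_eq_zero_iff (n := 2) (by norm_num) |>.1 (hterm p q)
        have h3 : (1 / 3 : ℝ) ≠ 0 := by norm_num
        exact (mul_eq_zero.1 this).resolve_left h3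
      -- z ≠ 0
      have hz0 : ∃ i, z i ≠ 0 := by
        by_contra hc
        push_neg at hc
        have : z = 0 := by ext i; exact hc i
        rw [this] at hz; simp at hz
      obtain ⟨i, hi⟩ := hz0
      have hzp : ∀ p, p ≠ i → z p = 0 := by
        intro p hp
        have := hsum0 p i
        rw [key (fun a => z a) p i, if_neg hp] at this
        have h4 : A p i * (z p * z i) = 0 := by linear_combination (-2 : ℝ) * this
        rcases mul_eq_zero.1 h4 with h' | h'
        · exact absurd h' (hAoff p i hp)
        · rcases mul_eq_zero.1 h' with h5 | h5
          · exact h5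
          · exact absurd h5 hi
      -- pick p ≠ i
      have h2n : 2 ≤ n := by omega
      obtain ⟨p, hp⟩ : ∃ p : Fin n, p ≠ i := by
        rcases Fintype.exists_ne_of_one_lt_card (by simp; omega) i with ⟨p, hp⟩
        exact ⟨p, hp⟩
      have := hsum0 p p
      rw [key (fun a => z a) p p] at this
      rw [if_pos rfl] at this
      have hsingle : (∑ a, A p a / 2 * z a ^ 2) = A p i / 2 * z i ^ 2 := by
        apply Finset.sum_eq_single
        · intro b _ hb
          rw [hzp b hb]; ring
        · intro hb; exact absurd (Finset.mem_univ i) hb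
      rw [hsingle, hzp p hp] at this
      have h5 : A p i / 2 * z i ^ 2 = 0 := by linear_combination this
      rcases mul_eq_zero.1 h5 with h' | h'
      · exact absurd h' (by simpa using hAoff p i hp)
      · exact hi (pow_eq_zero_iff (by norm_num) |>.1 h')
    -- compactness
    have hne : (Metric.sphere (0 : En n) 1).Nonempty := by
      refine ⟨EuclideanSpace.single ⟨0, by omega⟩ (1 : ℝ), ?_⟩
      simp [EuclideanSpace.norm_single]
    obtain ⟨z0, hz0S, hmin⟩ :=
      (isCompact_sphere (0 : En n) 1).exists_isMinOn hne hfcont.continuousOn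
    have hz0 : ‖z0‖ = 1 := by simpa using hz0S
    refine ⟨f z0, hpos z0 hz0, fun z => ?_⟩
    by_cases hzz : z = 0
    · subst hzz
      simpa using hfnonneg 0
    · have hc : (0 : ℝ) < ‖z‖ := norm_pos_iff.2 hzz
      set u : En n := ‖z‖⁻¹ • z with hu
      have hun : ‖u‖ = 1 := by
        rw [hu, norm_smul]
        simp [abs_of_pos (inv_pos.2 hc), inv_mul_cancel₀ hc.ne']
      have hfz : f z = ‖z‖ ^ 4 * f u := by
        have : z = ‖z‖ • u := by
          rw [hu, smul_smul, mul_inv_cancel₀ hc.ne', one_smul]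
        conv_lhs => rw [this]
        exact hhom _ _
      have hmin' : f z0 ≤ f u := hmin (by simpa using hun)
      calc f z0 * ‖z‖ ^ 4 ≤ f u * ‖z‖ ^ 4 := by
            apply mul_le_mul_of_nonneg_right hmin' (by positivity)
        _ = f z := by rw [hfz]; ring
end
end

section
/- Let n ≥ 3, let W be a four-linear form on ℝⁿ with the symmetries of a Weyl tensor, and let h_{ij}(x) = (1/3)∑_{p,q=1}^n W_{ipjq} x_p x_q. Then ∫_{𝕊^{n−1}} ∑_{i,j,l=1}^n (∂_i h_{jl}(x))² dσ(x) = (ω_{n−1}/(9n)) ∑_{k=1}^n T_{kk}, where the integral is over the unit sphere 𝕊^{n−1} ⊂ ℝⁿ with its canonical measure σ and ω_{n−1} = σ(𝕊^{n−1}). -/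
open MeasureTheory Real
open Pointwise

noncomputable section

/-- `T_{kl} = ∑_{p,q,r} (W_{kpqr}+W_{krqp})(W_{lpqr}+W_{lrqp})`. -/
def Tkl (n : ℕ) (W : Fin n → Fin n → Fin n → Fin n → ℝ) (k l : Fin n) : ℝ :=
  ∑ p, ∑ q, ∑ r, (W k p q r + W k r q p) * (W l p q r + W l r q p)

/-- The quadratic field associated to `W`: `h_{ij}(x) = (1/3)∑_{p,q} W_{ipjq} x_p x_q`. -/
noncomputable def hW (n : ℕ) (W : Fin n → Fin n → Fin n → Fin n → ℝ)
    (x : En n) (i j : Fin n) : ℝ :=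
  (1 / 3) * ∑ p, ∑ q, W i p j q * x p * x q

/-- The canonical surface measure on the unit sphere `𝕊^{n-1} ⊂ ℝⁿ`. -/
noncomputable def sphereMeasure (n : ℕ) :
    Measure (Metric.sphere (0 : En n) 1) :=
  (volume : Measure (En n)).toSphere

/-- `ω_{n-1}`, the total canonical measure of the unit sphere `𝕊^{n-1} ⊂ ℝⁿ`. -/
noncomputable def omegaSphere (n : ℕ) : ℝ := (sphereMeasure n Set.univ).toReal

section Aux

variable {n : ℕ}

lemma hasFDerivAt_hW (n : ℕ) (W : Fin n → Fin n → Fin n → Fin n → ℝ) (j l : Fin n) (x : En n) :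
    HasFDerivAt (fun y => hW n W y j l)
      ((1/3 : ℝ) • ∑ p, ∑ q, ((W j p l q * x p) • (EuclideanSpace.proj q : En n →L[ℝ] ℝ)
          + (x q) • ((W j p l q) • (EuclideanSpace.proj p : En n →L[ℝ] ℝ)))) x := by
  have h1 : ∀ p : Fin n, HasFDerivAt (fun y : En n => y p)
      (EuclideanSpace.proj p : En n →L[ℝ] ℝ) x := fun p => by
    have : (fun y : En n => y p) = ⇑(EuclideanSpace.proj (𝕜 := ℝ) p : En n →L[ℝ] ℝ) := rfl
    rw [this]; exact (EuclideanSpace.proj (𝕜 := ℝ) p : En n →L[ℝ] ℝ).hasFDerivAt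
  have H : HasFDerivAt (fun y : En n => ∑ p, ∑ q, W j p l q * y p * y q)
      (∑ p, ∑ q, ((W j p l q * x p) • (EuclideanSpace.proj q : En n →L[ℝ] ℝ)
          + (x q) • ((W j p l q) • (EuclideanSpace.proj p : En n →L[ℝ] ℝ)))) x := by
    apply HasFDerivAt.fun_sum
    intro p _
    apply HasFDerivAt.fun_sum
    intro q _
    exact ((h1 p).const_mul (W j p l q)).mul (h1 q)
  exact H.const_mul (1/3 : ℝ)

lemma pd_hW (n : ℕ) (W : Fin n → Fin n → Fin n → Fin n → ℝ) (i j l : Fin n) (x : En n) :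
    pd i (fun y => hW n W y j l) x = (1/3) * ∑ q, (W j i l q + W j q l i) * x q := by
  rw [pd, (hasFDerivAt_hW n W j l x).fderiv]
  simp only [ContinuousLinearMap.coe_smul', Pi.smul_apply, ContinuousLinearMap.sum_apply,
    ContinuousLinearMap.add_apply, ContinuousLinearMap.smul_apply, PiLp.proj_apply,
    EuclideanSpace.single_apply, smul_eq_mul, mul_ite, mul_one, mul_zero]
  simp only [Finset.sum_add_distrib, Finset.sum_ite_irrel, Finset.sum_const_zero,
    Finset.sum_ite_eq', Finset.mem_univ, if_true]
  rw [mul_add, Finset.mul_sum, Finset.mul_sum, ← Finset.sum_add_distrib, Finset.mul_sum]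
  apply Finset.sum_congr rfl
  intro q _
  ring

lemma mem_sphere_of_isom (e : En n ≃ₗᵢ[ℝ] En n) (x : Metric.sphere (0 : En n) 1) :
    e ↑x ∈ Metric.sphere (0 : En n) 1 := by
  have hx : ‖(x : En n)‖ = 1 := by
    have := x.2
    rwa [mem_sphere_iff_norm, sub_zero] at this
  simp [mem_sphere_iff_norm, e.norm_map, hx]

/-- The sphere self-map induced by a linear isometry. -/
def sphereMap (e : En n ≃ₗᵢ[ℝ] En n) :
    Metric.sphere (0 : En n) 1 ≃ᵐ Metric.sphere (0 : En n) 1 where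
  toFun x := ⟨e ↑x, mem_sphere_of_isom e x⟩
  invFun x := ⟨e.symm ↑x, mem_sphere_of_isom e.symm x⟩
  left_inv x := by apply Subtype.ext; simp
  right_inv x := by apply Subtype.ext; simp
  measurable_toFun := Measurable.subtype_mk ((e.continuous.measurable).comp measurable_subtype_coe)
  measurable_invFun := Measurable.subtype_mk
    ((e.symm.continuous.measurable).comp measurable_subtype_coe)

lemma map_sphereMap (e : En n ≃ₗᵢ[ℝ] En n) :
    Measure.map (sphereMap e) (sphereMeasure n) = sphereMeasure n := by
  have hME : ∀ B : Set (En n), volume (e ⁻¹' B) = volume B := by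
    intro B
    have h1 : (Measure.map (e.toHomeomorph.toMeasurableEquiv) volume) B
        = volume (e.toHomeomorph.toMeasurableEquiv ⁻¹' B) :=
      MeasurableEquiv.map_apply _ _
    have h2 : Measure.map (e.toHomeomorph.toMeasurableEquiv) volume = volume :=
      e.measurePreserving.map_eq
    rw [h2] at h1
    exact h1.symm
  ext s hs
  rw [MeasurableEquiv.map_apply]
  have hs' : MeasurableSet (sphereMap e ⁻¹' s) := (sphereMap e).measurable hs
  rw [sphereMeasure, Measure.toSphere_apply' _ hs', Measure.toSphere_apply' _ hs]
  congr 1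
  have himg : (Subtype.val '' (sphereMap e ⁻¹' s)) = e ⁻¹' (Subtype.val '' s) := by
    ext z
    constructor
    · rintro ⟨y, hy, rfl⟩
      exact ⟨sphereMap e y, hy, rfl⟩
    · rintro ⟨w, hw, hwz⟩
      have hz : z ∈ Metric.sphere (0 : En n) 1 := by
        have hw1 : ‖(w : En n)‖ = 1 := by
          have := w.2
          rwa [mem_sphere_iff_norm, sub_zero] at this
        have : ‖z‖ = 1 := by rw [← e.norm_map z, ← hwz, hw1]
        simpa [mem_sphere_iff_norm, sub_zero] using this
      refine ⟨⟨z, hz⟩, ?_, rfl⟩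
      show sphereMap e ⟨z, hz⟩ ∈ s
      have : sphereMap e ⟨z, hz⟩ = w := by
        apply Subtype.ext
        exact hwz.symm
      rw [this]; exact hw
  rw [himg]
  have hsmul : Set.Ioo (0:ℝ) 1 • (e ⁻¹' (Subtype.val '' s))
      = e ⁻¹' (Set.Ioo (0:ℝ) 1 • (Subtype.val '' s)) := by
    ext z
    simp only [Set.mem_smul, Set.mem_preimage]
    constructor
    · rintro ⟨r, hr, y, hy, rfl⟩
      exact ⟨r, hr, e y, hy, (e.map_smul r y).symm⟩
    · rintro ⟨r, hr, b, hb, hbz⟩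
      refine ⟨r, hr, e.symm b, by simpa using hb, ?_⟩
      apply e.injective
      rw [e.map_smul]
      simpa using hbz
  rw [hsmul, hME]

lemma integral_comp_sphereMap (e : En n ≃ₗᵢ[ℝ] En n) (f : Metric.sphere (0 : En n) 1 → ℝ) :
    ∫ x, f (sphereMap e x) ∂(sphereMeasure n) = ∫ x, f x ∂(sphereMeasure n) := by
  rw [← MeasureTheory.integral_map_equiv (sphereMap e) f, map_sphereMap]

def negLin (n : ℕ) (p : Fin n) : En n →ₗ[ℝ] En n where
  toFun x := WithLp.toLp 2 (fun q => if q = p then -x q else x q)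
  map_add' x y := by
    ext q; by_cases h : q = p <;> simp [h, PiLp.add_apply] <;> ring
  map_smul' c x := by
    ext q; by_cases h : q = p <;> simp [h, PiLp.smul_apply] <;> ring

def negIso (n : ℕ) (p : Fin n) : En n ≃ₗᵢ[ℝ] En n :=
  { toLinearEquiv := LinearEquiv.ofInvolutive (negLin n p) (fun x => by
      ext q; by_cases h : q = p <;> simp [negLin, h])
    norm_map' := fun x => by
      rw [EuclideanSpace.norm_eq, EuclideanSpace.norm_eq]
      congr 1
      apply Finset.sum_congr rfl
      intro q _
      by_cases h : q = p <;> simp [negLin, h] }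

lemma negIso_apply (p : Fin n) (x : En n) (q : Fin n) :
    negIso n p x q = if q = p then -x q else x q := rfl

def swapIso (n : ℕ) (p q : Fin n) : En n ≃ₗᵢ[ℝ] En n :=
  LinearIsometryEquiv.piLpCongrLeft 2 ℝ ℝ (Equiv.swap p q)

lemma swapIso_apply (p q r : Fin n) (x : En n) :
    swapIso n p q x r = x (Equiv.swap p q r) := by
  simp [swapIso, LinearIsometryEquiv.piLpCongrLeft_apply, Equiv.piCongrLeft'_apply,
    Equiv.symm_swap]

lemma integrable_cont {f : Metric.sphere (0 : En n) 1 → ℝ} (hf : Continuous f) :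
    Integrable f (sphereMeasure n) := by
  have hfin : IsFiniteMeasure (sphereMeasure n) := by unfold sphereMeasure; infer_instance
  exact hf.integrable_of_hasCompactSupport
    (IsCompact.of_isClosed_subset isCompact_univ (isClosed_tsupport f) (Set.subset_univ _))

lemma continuous_coord (p : Fin n) :
    Continuous (fun x : Metric.sphere (0 : En n) 1 => (x : En n) p) :=
  (EuclideanSpace.proj (𝕜 := ℝ) p : En n →L[ℝ] ℝ).continuous.comp continuous_subtype_val

lemma integral_coord_mul (p q : Fin n) (hpq : p ≠ q) :
    ∫ x : Metric.sphere (0 : En n) 1, ((x : En n) p * (x : En n) q) ∂(sphereMeasure n) = 0 := by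
  have h := integral_comp_sphereMap (negIso n p) (fun x => (x : En n) p * (x : En n) q)
  have hneg : ∀ x : Metric.sphere (0 : En n) 1,
      ((sphereMap (negIso n p) x : En n) p * (sphereMap (negIso n p) x : En n) q)
        = -((x : En n) p * (x : En n) q) := by
    intro x
    show (negIso n p (x : En n)) p * (negIso n p (x : En n)) q = _
    rw [negIso_apply, negIso_apply]
    simp [hpq.symm]
  simp only [hneg] at h
  rw [integral_neg] at h
  linarith

lemma integral_coord_sq (hn : 0 < n) (p : Fin n) :
    ∫ x : Metric.sphere (0 : En n) 1, ((x : En n) p)^2 ∂(sphereMeasure n)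
      = omegaSphere n / n := by
  have hswap : ∀ q : Fin n, (∫ x : Metric.sphere (0 : En n) 1, ((x : En n) q)^2
      ∂(sphereMeasure n)) = ∫ x : Metric.sphere (0 : En n) 1, ((x : En n) p)^2
      ∂(sphereMeasure n) := by
    intro q
    have h := integral_comp_sphereMap (swapIso n p q) (fun x => ((x : En n) q)^2)
    have hsw : ∀ x : Metric.sphere (0 : En n) 1,
        ((sphereMap (swapIso n p q) x : En n) q)^2 = ((x : En n) p)^2 := by
      intro x
      show ((swapIso n p q (x : En n)) q)^2 = _
      rw [swapIso_apply, Equiv.swap_apply_right]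
    simp only [hsw] at h
    exact h.symm
  have hsum : (∑ q : Fin n, ∫ x : Metric.sphere (0 : En n) 1, ((x : En n) q)^2
      ∂(sphereMeasure n)) = omegaSphere n := by
    rw [← integral_finset_sum (f := fun q (x : Metric.sphere (0 : En n) 1) => ((x : En n) q)^2) _ (fun q _ => integrable_cont ((continuous_coord q).pow 2))]
    have hx : ∀ x : Metric.sphere (0 : En n) 1, (∑ q, ((x : En n) q)^2) = 1 := by
      intro x
      have h1 : ‖(x : En n)‖ = 1 := by
        have := x.2
        rwa [Metric.mem_sphere, dist_zero_right] at this
      have h2 := EuclideanSpace.norm_eq (x : En n)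
      rw [h1] at h2
      have h3 : (∑ q, ‖(x : En n) q‖^2) = 1 := Real.sqrt_eq_one.mp h2.symm
      have h4 : (∑ q, ((x : En n) q)^2) = ∑ q, ‖(x : En n) q‖^2 :=
        Finset.sum_congr rfl fun q _ => by rw [Real.norm_eq_abs, sq_abs]
      rw [h4, h3]
    simp only [hx]
    simp [omegaSphere, Measure.real]
  have hconst : (∑ q : Fin n, ∫ x : Metric.sphere (0 : En n) 1, ((x : En n) q)^2
      ∂(sphereMeasure n)) = n * ∫ x : Metric.sphere (0 : En n) 1, ((x : En n) p)^2
      ∂(sphereMeasure n) := by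
    rw [Finset.sum_congr rfl (fun q _ => hswap q)]
    simp [Finset.sum_const, nsmul_eq_mul]
  rw [hconst] at hsum
  field_simp
  linarith [hsum]

lemma integral_coord_pair (hn : 0 < n) (q r : Fin n) :
    (∫ x : Metric.sphere (0 : En n) 1, ((x : En n) q * (x : En n) r) ∂(sphereMeasure n))
      = if q = r then omegaSphere n / n else 0 := by
  by_cases h : q = r
  · subst h
    rw [if_pos rfl]
    have : ∀ x : Metric.sphere (0 : En n) 1, ((x : En n) q * (x : En n) q) = ((x : En n) q)^2 :=
      fun x => (sq _).symm
    simp only [this]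
    exact integral_coord_sq hn q
  · rw [if_neg h]
    exact integral_coord_mul q r h

end Aux

theorem stmt10 (n : ℕ) (hn : 3 ≤ n) (W : Fin n → Fin n → Fin n → Fin n → ℝ)
    (hWeyl : IsWeyl n W) :
    (∫ x : Metric.sphere (0 : En n) 1,
        ∑ i, ∑ j, ∑ l, (pd i (fun y => hW n W y j l) (x : En n)) ^ 2
          ∂(sphereMeasure n)) =
      omegaSphere n / (9 * (n : ℝ)) * ∑ k, Tkl n W k k := by
  have hn0 : 0 < n := by omega
  -- pointwise expansion of the integrand
  have hpt : ∀ x : Metric.sphere (0 : En n) 1,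
      (∑ i, ∑ j, ∑ l, (pd i (fun y => hW n W y j l) (x : En n)) ^ 2)
        = ∑ z : Fin n × Fin n × Fin n × Fin n × Fin n,
            (1/9 * ((W z.2.1 z.1 z.2.2.1 z.2.2.2.1 + W z.2.1 z.2.2.2.1 z.2.2.1 z.1)
              * (W z.2.1 z.1 z.2.2.1 z.2.2.2.2 + W z.2.1 z.2.2.2.2 z.2.2.1 z.1)))
            * ((x : En n) z.2.2.2.1 * (x : En n) z.2.2.2.2) := by
    intro x
    simp only [Fintype.sum_prod_type]
    apply Finset.sum_congr rfl; intro i _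
    apply Finset.sum_congr rfl; intro j _
    apply Finset.sum_congr rfl; intro l _
    rw [pd_hW]
    have hr : ((1/3 : ℝ) * ∑ q, (W j i l q + W j q l i) * (x : En n) q)^2
        = 1/9 * ((∑ q, (W j i l q + W j q l i) * (x : En n) q)
            * (∑ r, (W j i l r + W j r l i) * (x : En n) r)) := by ring
    rw [hr, Finset.sum_mul_sum, Finset.mul_sum]
    apply Finset.sum_congr rfl; intro q _
    rw [Finset.mul_sum]
    apply Finset.sum_congr rfl; intro r _
    ring
  have hfun : (fun x : Metric.sphere (0 : En n) 1 =>
      ∑ i, ∑ j, ∑ l, (pd i (fun y => hW n W y j l) (x : En n)) ^ 2)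
      = fun x : Metric.sphere (0 : En n) 1 =>
        ∑ z : Fin n × Fin n × Fin n × Fin n × Fin n,
            (1/9 * ((W z.2.1 z.1 z.2.2.1 z.2.2.2.1 + W z.2.1 z.2.2.2.1 z.2.2.1 z.1)
              * (W z.2.1 z.1 z.2.2.1 z.2.2.2.2 + W z.2.1 z.2.2.2.2 z.2.2.1 z.1)))
            * ((x : En n) z.2.2.2.1 * (x : En n) z.2.2.2.2) := funext hpt
  rw [hfun, integral_finset_sum (f := fun (z : Fin n × Fin n × Fin n × Fin n × Fin n) (x : Metric.sphere (0 : En n) 1) => (1/9 * ((W z.2.1 z.1 z.2.2.1 z.2.2.2.1 + W z.2.1 z.2.2.2.1 z.2.2.1 z.1) * (W z.2.1 z.1 z.2.2.1 z.2.2.2.2 + W z.2.1 z.2.2.2.2 z.2.2.1 z.1))) * ((x : En n) z.2.2.2.1 * (x : En n) z.2.2.2.2)) _ (fun z _ => integrable_cont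
    (continuous_const.mul ((continuous_coord z.2.2.2.1).mul (continuous_coord z.2.2.2.2))))]
  have hz : ∀ z : Fin n × Fin n × Fin n × Fin n × Fin n,
      (∫ x : Metric.sphere (0 : En n) 1,
        (1/9 * ((W z.2.1 z.1 z.2.2.1 z.2.2.2.1 + W z.2.1 z.2.2.2.1 z.2.2.1 z.1)
              * (W z.2.1 z.1 z.2.2.1 z.2.2.2.2 + W z.2.1 z.2.2.2.2 z.2.2.1 z.1)))
            * ((x : En n) z.2.2.2.1 * (x : En n) z.2.2.2.2) ∂(sphereMeasure n))
      = (1/9 * ((W z.2.1 z.1 z.2.2.1 z.2.2.2.1 + W z.2.1 z.2.2.2.1 z.2.2.1 z.1)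
              * (W z.2.1 z.1 z.2.2.1 z.2.2.2.2 + W z.2.1 z.2.2.2.2 z.2.2.1 z.1)))
        * (if z.2.2.2.1 = z.2.2.2.2 then omegaSphere n / n else 0) := by
    intro z
    rw [integral_const_mul, integral_coord_pair hn0]
  rw [Finset.sum_congr rfl (fun z _ => hz z)]
  simp only [Fintype.sum_prod_type]
  simp only [mul_ite, mul_zero, Finset.sum_ite_eq, Finset.sum_ite_eq', Finset.mem_univ, if_true]
  rw [Finset.sum_comm]
  unfold Tkl
  simp only [Finset.mul_sum]
  apply Finset.sum_congr rfl; intro j _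
  apply Finset.sum_congr rfl; intro i _
  apply Finset.sum_congr rfl; intro l _
  apply Finset.sum_congr rfl; intro q _
  ring
end
end
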